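/- Let A be a finite nonempty set, let f, Q, e : A → ℝ, and let η > 0. Let π = softmax(f) and π' = softmax(f + e + ηQ). Then for any probability distribution p on A, Σ_{a∈A} Q(a) (p(a) − π(a)) ≤ (1/η)[KL(p, π) − KL(p, π')] + (η/2)·(max_{a∈A} |Q(a)|)² + (2/η)·max_{a∈A} |e(a)|. -/

import Mathlib

/-- The soft-max distribution on a finite nonempty set associated with a score function `f`. -/
noncomputable def softmax {A : Type*} [Fintype A] (f : A → ℝ) : A → ℝ :=
  fun a => Real.exp (f a) / ∑ a', Real.exp (f a')

/-- The Kullback–Leibler divergence between two distributions on a finite set,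
with the convention `0 · log 0 = 0` (note `Real.log 0 = 0` in Mathlib). -/
noncomputable def klDiv {A : Type*} [Fintype A] (p q : A → ℝ) : ℝ :=
  ∑ a, p a * Real.log (p a / q a)

open Real Finset in
lemma key_mgf {A : Type*} [Fintype A] [Nonempty A] (w Q : A → ℝ) (hw0 : ∀ a, 0 ≤ w a)
    (hw1 : ∑ a, w a = 1) (M : ℝ) (hM : ∀ a, |Q a| ≤ M) (η : ℝ) (hη : 0 ≤ η) :
    Real.log (∑ a, w a * Real.exp (η * Q a)) ≤ η * (∑ a, w a * Q a) + η^2 * M^2 / 2 := by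
  have hMnn : 0 ≤ M := le_trans (abs_nonneg _) (hM (Classical.arbitrary A))
  -- positivity of G
  have hGpos : ∀ t : ℝ, 0 < ∑ a, w a * Real.exp (t * Q a) := by
    intro t
    have h1 : ∀ a ∈ Finset.univ (α := A), w a * Real.exp (-(|t| * M)) ≤ w a * Real.exp (t * Q a) := by
      intro a _
      apply mul_le_mul_of_nonneg_left _ (hw0 a)
      apply Real.exp_le_exp.mpr
      have : |t * Q a| ≤ |t| * M := by
        rw [abs_mul]
        exact mul_le_mul_of_nonneg_left (hM a) (abs_nonneg t)
      linarith [neg_abs_le (t * Q a)]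
    have h2 : (0:ℝ) < ∑ a, w a * Real.exp (-(|t| * M)) := by
      rw [← Finset.sum_mul, hw1, one_mul]
      exact Real.exp_pos _
    exact lt_of_lt_of_le h2 (Finset.sum_le_sum h1)
  -- derivatives
  have hG : ∀ t : ℝ, HasDerivAt (fun t => ∑ a, w a * Real.exp (t * Q a))
      (∑ a, w a * (Q a * Real.exp (t * Q a))) t := by
    intro t
    apply HasDerivAt.fun_sum
    intro a _
    have h1 : HasDerivAt (fun t : ℝ => t * Q a) (Q a) t := hasDerivAt_mul_const (Q a)
    have h3 := h1.exp.const_mul (w a)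
    exact h3.congr_deriv (by ring)
  have hD1 : ∀ t : ℝ, HasDerivAt (fun t => ∑ a, w a * (Q a * Real.exp (t * Q a)))
      (∑ a, w a * (Q a * (Q a * Real.exp (t * Q a)))) t := by
    intro t
    apply HasDerivAt.fun_sum
    intro a _
    have h1 : HasDerivAt (fun t : ℝ => t * Q a) (Q a) t := hasDerivAt_mul_const (Q a)
    have h3 := h1.exp.const_mul (w a * Q a)
    have h4 : (fun t : ℝ => w a * (Q a * Real.exp (t * Q a)))
        = (fun y : ℝ => w a * Q a * Real.exp (y * Q a)) := by funext y; ring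
    rw [h4]
    exact h3.congr_deriv (by ring)
  -- D2 ≤ M^2 * G
  have hD2le : ∀ t : ℝ, ∑ a, w a * (Q a * (Q a * Real.exp (t * Q a)))
      ≤ M^2 * ∑ a, w a * Real.exp (t * Q a) := by
    intro t
    rw [Finset.mul_sum]
    apply Finset.sum_le_sum
    intro a _
    have hq : Q a * Q a ≤ M^2 := by
      have := sq_abs (Q a)
      nlinarith [hM a, abs_nonneg (Q a)]
    have he := Real.exp_pos (t * Q a)
    nlinarith [mul_nonneg (mul_nonneg (hw0 a) (sub_nonneg.mpr hq)) he.le]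
  -- ψ = deriv of φ ; ψ monotone
  set ψ : ℝ → ℝ := fun t => (∑ a, w a * Q a) + t * M^2
      - (∑ a, w a * (Q a * Real.exp (t * Q a))) / (∑ a, w a * Real.exp (t * Q a)) with hψdef
  have hψderiv : ∀ t : ℝ, HasDerivAt ψ
      (M^2 - ((∑ a, w a * (Q a * (Q a * Real.exp (t * Q a)))) * (∑ a, w a * Real.exp (t * Q a))
        - (∑ a, w a * (Q a * Real.exp (t * Q a))) * (∑ a, w a * (Q a * Real.exp (t * Q a))))
        / (∑ a, w a * Real.exp (t * Q a))^2) t := by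
    intro t
    have hdiv := (hD1 t).div (hG t) (ne_of_gt (hGpos t))
    have hlin : HasDerivAt (fun t : ℝ => (∑ a, w a * Q a) + t * M^2) (M^2) t := by
      simpa using ((hasDerivAt_mul_const (M^2)).const_add (∑ a, w a * Q a))
    exact hlin.sub hdiv
  have hψmono : Monotone ψ := by
    apply monotone_of_deriv_nonneg
    · intro t
      exact (hψderiv t).differentiableAt
    · intro t
      rw [(hψderiv t).deriv]
      have hg := hGpos t
      have h1 : ((∑ a, w a * (Q a * (Q a * Real.exp (t * Q a)))) * (∑ a, w a * Real.exp (t * Q a))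
          - (∑ a, w a * (Q a * Real.exp (t * Q a))) * (∑ a, w a * (Q a * Real.exp (t * Q a))))
          / (∑ a, w a * Real.exp (t * Q a))^2 ≤ M^2 := by
        rw [div_le_iff₀ (by positivity)]
        have := hD2le t
        nlinarith [sq_nonneg (∑ a, w a * (Q a * Real.exp (t * Q a)))]
      linarith
  have hψ0 : ψ 0 = 0 := by
    simp only [hψdef]
    have h1 : ∑ a, w a * Real.exp ((0:ℝ) * Q a) = 1 := by
      simp [hw1]
    have h2 : ∑ a, w a * (Q a * Real.exp ((0:ℝ) * Q a)) = ∑ a, w a * Q a := by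
      simp
    rw [h1, h2]
    ring
  have hψnn : ∀ t : ℝ, 0 ≤ t → 0 ≤ ψ t := by
    intro t ht
    rw [← hψ0]
    exact hψmono ht
  -- φ monotone on Ici 0
  set φ : ℝ → ℝ := fun t => t * (∑ a, w a * Q a) + t^2 * M^2 / 2
      - Real.log (∑ a, w a * Real.exp (t * Q a)) with hφdef
  have hφderiv : ∀ t : ℝ, HasDerivAt φ (ψ t) t := by
    intro t
    have hlog := (hG t).log (ne_of_gt (hGpos t))
    have h1 : HasDerivAt (fun t : ℝ => t * (∑ a, w a * Q a) + t^2 * M^2 / 2)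
        ((∑ a, w a * Q a) + t * M^2) t := by
      have ha := hasDerivAt_mul_const (∑ a, w a * Q a) (x := t)
      have hb : HasDerivAt (fun t : ℝ => t^2 * M^2 / 2) (t * M^2) t := by
        have := ((hasDerivAt_pow 2 t).mul_const (M^2)).div_const 2
        exact this.congr_deriv (by ring)
      exact ha.add hb
    exact h1.sub hlog
  have hφmono : MonotoneOn φ (Set.Ici 0) := by
    apply monotoneOn_of_deriv_nonneg (convex_Ici 0)
    · have hd : Differentiable ℝ φ := fun t => (hφderiv t).differentiableAt
      exact hd.continuous.continuousOn
    · intro t ht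
      exact (hφderiv t).differentiableAt.differentiableWithinAt
    · intro t ht
      rw [(hφderiv t).deriv]
      exact hψnn t (le_of_lt (by simpa using ht))
  have hφ0 : φ 0 = 0 := by
    simp only [hφdef]
    have h1 : ∑ a, w a * Real.exp ((0:ℝ) * Q a) = 1 := by simp [hw1]
    rw [h1]
    simp
  have := hφmono (Set.self_mem_Ici) (Set.mem_Ici.mpr hη) hη
  rw [hφ0] at this
  simp only [hφdef] at this
  linarith


/-- One-step mirror-descent inequality for soft-max policies: with `π = softmax f`,
`π' = softmax (f + e + η Q)`, `η > 0`, and any probability distribution `p` on `A`,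
`Σₐ Q(a)(p(a) − π(a)) ≤ (1/η)[KL(p,π) − KL(p,π')] + (η/2)(maxₐ|Q(a)|)² + (2/η) maxₐ|e(a)|`. -/
theorem stmt_6 {A : Type*} [Fintype A] [Nonempty A] (f Q e : A → ℝ) (η : ℝ) (hη : 0 < η)
    (p : A → ℝ) (hp0 : ∀ a, 0 ≤ p a) (hp1 : ∑ a, p a = 1) :
    ∑ a, Q a * (p a - softmax f a)
      ≤ 1 / η * (klDiv p (softmax f) - klDiv p (softmax (fun a => f a + e a + η * Q a)))
        + η / 2 * (Finset.univ.sup' Finset.univ_nonempty fun a => |Q a|) ^ 2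
        + 2 / η * (Finset.univ.sup' Finset.univ_nonempty fun a => |e a|) := by
  classical
  set M := (Finset.univ.sup' Finset.univ_nonempty fun a => |Q a|) with hMdef
  set E := (Finset.univ.sup' Finset.univ_nonempty fun a => |e a|) with hEdef
  have hM : ∀ a, |Q a| ≤ M := by
    intro a; rw [hMdef]; exact Finset.le_sup' (fun a => |Q a|) (Finset.mem_univ a)
  have hE : ∀ a, |e a| ≤ E := by
    intro a; rw [hEdef]; exact Finset.le_sup' (fun a => |e a|) (Finset.mem_univ a)
  have hE0 : 0 ≤ E := le_trans (abs_nonneg _) (hE (Classical.arbitrary A))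
  set Z := ∑ a, Real.exp (f a) with hZdef
  set Z' := ∑ a, Real.exp (f a + e a + η * Q a) with hZ'def
  have hZpos : 0 < Z := Finset.sum_pos (fun a _ => Real.exp_pos _) Finset.univ_nonempty
  have hZ'pos : 0 < Z' := Finset.sum_pos (fun a _ => Real.exp_pos _) Finset.univ_nonempty
  have hπpos : ∀ a, 0 < softmax f a := fun a => div_pos (Real.exp_pos _) hZpos
  have hπsum : ∑ a, softmax f a = 1 := by
    unfold softmax
    rw [← Finset.sum_div, ← hZdef, div_self hZpos.ne']
  -- KL difference identity
  have hterm : ∀ a, p a * Real.log (p a / softmax f a)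
      - p a * Real.log (p a / softmax (fun a => f a + e a + η * Q a) a)
      = p a * (e a + η * Q a - (Real.log Z' - Real.log Z)) := by
    intro a
    by_cases hpa : p a = 0
    · simp [hpa]
    · have hpa' : 0 < p a := lt_of_le_of_ne (hp0 a) (Ne.symm hpa)
      have h1 : Real.log (p a / softmax f a) = Real.log (p a) - (f a - Real.log Z) := by
        unfold softmax
        rw [← hZdef, Real.log_div hpa (by positivity), Real.log_div (Real.exp_ne_zero _) hZpos.ne',
          Real.log_exp]
      have h2 : Real.log (p a / softmax (fun a => f a + e a + η * Q a) a)
          = Real.log (p a) - ((f a + e a + η * Q a) - Real.log Z') := by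
        unfold softmax
        rw [← hZ'def, Real.log_div hpa (by positivity),
          Real.log_div (Real.exp_ne_zero _) hZ'pos.ne', Real.log_exp]
      rw [h1, h2]; ring
  have hKL : klDiv p (softmax f) - klDiv p (softmax (fun a => f a + e a + η * Q a))
      = (∑ a, p a * e a) + η * (∑ a, p a * Q a) - (Real.log Z' - Real.log Z) := by
    unfold klDiv
    rw [← Finset.sum_sub_distrib]
    rw [Finset.sum_congr rfl (fun a _ => hterm a)]
    have : ∀ a ∈ Finset.univ (α := A), p a * (e a + η * Q a - (Real.log Z' - Real.log Z))
        = p a * e a + η * (p a * Q a) - (Real.log Z' - Real.log Z) * p a := by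
      intro a _; ring
    rw [Finset.sum_congr rfl this, Finset.sum_sub_distrib, Finset.sum_add_distrib,
      ← Finset.mul_sum, ← Finset.mul_sum, hp1]
    ring
  -- key MGF bound with w = softmax f
  have hkey := key_mgf (softmax f) Q (fun a => (hπpos a).le) hπsum M hM η hη.le
  have hSpos : 0 < ∑ a, softmax f a * Real.exp (η * Q a) :=
    Finset.sum_pos (fun a _ => mul_pos (hπpos a) (Real.exp_pos _)) Finset.univ_nonempty
  -- bound on Z'
  have hZ'le : Z' ≤ Real.exp E * (Z * ∑ a, softmax f a * Real.exp (η * Q a)) := by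
    have hsum2 : Z * ∑ a, softmax f a * Real.exp (η * Q a)
        = ∑ a, Real.exp (f a) * Real.exp (η * Q a) := by
      rw [Finset.mul_sum]
      apply Finset.sum_congr rfl
      intro a _
      unfold softmax
      rw [← hZdef]
      field_simp
    rw [hsum2, Finset.mul_sum, hZ'def]
    apply Finset.sum_le_sum
    intro a _
    rw [Real.exp_add, Real.exp_add]
    have h1 : Real.exp (e a) ≤ Real.exp E :=
      Real.exp_le_exp.mpr (le_trans (le_abs_self _) (hE a))
    have h2 := Real.exp_pos (f a)
    have h3 := Real.exp_pos (η * Q a)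
    nlinarith [mul_le_mul_of_nonneg_left h1 (mul_nonneg h2.le h3.le)]
  have hD : Real.log Z' - Real.log Z
      ≤ E + (η * (∑ a, softmax f a * Q a) + η^2 * M^2 / 2) := by
    have h1 : Real.log Z' ≤ E + Real.log Z + Real.log (∑ a, softmax f a * Real.exp (η * Q a)) := by
      have := Real.log_le_log hZ'pos hZ'le
      rwa [Real.log_mul (Real.exp_ne_zero _) (mul_pos hZpos hSpos).ne',
        Real.log_mul hZpos.ne' hSpos.ne', Real.log_exp, ← add_assoc] at this
    linarith [hkey]
  have hpe : -E ≤ ∑ a, p a * e a := by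
    have h1 : ∀ a ∈ Finset.univ (α := A), p a * (-E) ≤ p a * e a := by
      intro a _
      apply mul_le_mul_of_nonneg_left _ (hp0 a)
      linarith [neg_abs_le (e a), hE a]
    have h2 := Finset.sum_le_sum h1
    rw [← Finset.sum_mul, hp1, one_mul] at h2
    linarith
  have hLHS : ∑ a, Q a * (p a - softmax f a)
      = (∑ a, p a * Q a) - (∑ a, softmax f a * Q a) := by
    rw [← Finset.sum_sub_distrib]
    apply Finset.sum_congr rfl
    intro a _; ring
  rw [hKL, hLHS]
  have hfin : η * ((∑ a, p a * Q a) - (∑ a, softmax f a * Q a))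
      ≤ η * (1 / η * ((∑ a, p a * e a) + η * (∑ a, p a * Q a) - (Real.log Z' - Real.log Z))
        + η / 2 * M ^ 2 + 2 / η * E) := by
    have hexp : η * (1 / η * ((∑ a, p a * e a) + η * (∑ a, p a * Q a)
          - (Real.log Z' - Real.log Z)) + η / 2 * M ^ 2 + 2 / η * E)
        = (∑ a, p a * e a) + η * (∑ a, p a * Q a) - (Real.log Z' - Real.log Z)
          + η ^ 2 * M ^ 2 / 2 + 2 * E := by
      field_simp
    rw [hexp]
    nlinarith [hD, hpe]
  exact (mul_le_mul_iff_right₀ hη).mp hfin
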